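/- There exist a constant C > 0 and, for each j₀ ∈ ℕ, functions ρ₁(j₀), ρ₂(j₀) ∈ L²([0,1)) with ‖ρ₁(j₀)‖_{h^{−1}_{j₀}} ≤ C 2^{−j₀} and ‖ρ₂(j₀)‖_{h^{−1}_{j₀}} ≤ C 2^{−j₀}, such that, writing j := ⌊α j₀⌋: (1) for every α ∈ (0, 2/3), 𝔤_j[ρ₁(j₀)] → 0 as j₀ → ∞, while for every α ∈ (2/3, 1), 𝔤_j[ρ₁(j₀)] → ∞ as j₀ → ∞; (2) for every α ∈ (0, 2/5), 2^j 𝔤_j[ρ₂(j₀)] → 0 as j₀ → ∞, while for every α ∈ (2/5, 1), 2^j 𝔤_j[ρ₂(j₀)] → ∞ as j₀ → ∞. In particular the thresholds j ≤ (2/3)j₀ and j ≤ (2/5)j₀ in the dyadic comparison estimates are optimal. -/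

import Mathlib

open MeasureTheory Filter

noncomputable section

/-- The Walsh functions on `[0,1)` (extended by `0` outside), defined by the recursion
`w_0 = 1_{[0,1)}`, `w_l(x) = w_{⌊l/2⌋}(2x)` for `x < 1/2` and
`w_l(x) = (-1)^l w_{⌊l/2⌋}(2x-1)` for `x ≥ 1/2`.  These are the wave packets
`w_l = φ_{[0,1) × [l,l+1)}` of the Walsh tile decomposition. -/
def walsh : ℕ → ℝ → ℝ
  | 0, x => if 0 ≤ x ∧ x < 1 then 1 else 0
  | (l+1), x =>
      if x < 1/2 then walsh ((l+1)/2) (2*x)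
      else (if (l+1) % 2 = 0 then (1:ℝ) else -1) * walsh ((l+1)/2) (2*x - 1)
  termination_by l _ => l
  decreasing_by all_goals omega

/-- The Walsh-Fourier coefficient `⟨ρ, w_l⟩_{L²([0,1))}`. -/
def wCoef (ρ : ℝ → ℝ) (l : ℕ) : ℝ :=
  ∫ x in Set.Ico (0:ℝ) 1, ρ x * walsh l x

/-- The dyadic analytic mixing seminorm up to scale `j`:
`‖ρ‖_{h^{-1}_j} = (∑_{l<2^j} (1+l²)^{-1} |⟨ρ, w_l⟩|²)^{1/2}`. -/
def hnormj (j : ℕ) (ρ : ℝ → ℝ) : ℝ :=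
  (∑ l ∈ Finset.range (2 ^ j), (1 + (l:ℝ) ^ 2)⁻¹ * (wCoef ρ l) ^ 2) ^ (1/2 : ℝ)

/-- The dyadic analytic mixing seminorm `‖ρ‖_{h^{-1}} = (∑_{l} (1+l²)^{-1} |⟨ρ, w_l⟩|²)^{1/2}`. -/
def hnormFull (ρ : ℝ → ℝ) : ℝ :=
  (∑' l : ℕ, (1 + (l:ℝ) ^ 2)⁻¹ * (wCoef ρ l) ^ 2) ^ (1/2 : ℝ)

/-- The dyadic interval `I_{k,j} = [2^{-j}k, 2^{-j}(k+1))`. -/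
def dyadI (j k : ℕ) : Set ℝ :=
  Set.Ico ((k : ℝ) / 2 ^ j) (((k : ℝ) + 1) / 2 ^ j)

/-- The dyadic geometric mixing functional `𝔤_j[ρ] = max_{I ∈ 𝒟_j} |I|⁻¹ |∫_I ρ|`. -/
def gdyad (j : ℕ) (ρ : ℝ → ℝ) : ℝ :=
  ⨆ k : Fin (2 ^ j), (2:ℝ) ^ j * |∫ x in dyadI j k, ρ x|

/-- The martingale projection `P_j ρ = ∑_{I ∈ 𝒟_j} (|I|⁻¹ ∫_I ρ) 1_I`. -/
def Pdyad (j : ℕ) (ρ : ℝ → ℝ) : ℝ → ℝ := fun x =>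
  ∑ k ∈ Finset.range (2 ^ j),
    Set.indicator (dyadI j k) (fun _ => (2:ℝ) ^ j * ∫ y in dyadI j k, ρ y) x

/-- The `L²([0,1))` norm. -/
def L2I (ρ : ℝ → ℝ) : ℝ :=
  (eLpNorm ρ 2 (volume.restrict (Set.Ico (0:ℝ) 1))).toReal

end
section Aux
open Real MeasureTheory Filter Finset

lemma walsh_zero_eq (x : ℝ) : walsh 0 x = if 0 ≤ x ∧ x < 1 then 1 else 0 := by
  simp [walsh]

lemma walsh_succ_eq (l : ℕ) (x : ℝ) : walsh (l+1) x =
    if x < 1/2 then walsh ((l+1)/2) (2*x)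
    else (if (l+1) % 2 = 0 then (1:ℝ) else -1) * walsh ((l+1)/2) (2*x - 1) := by
  rw [walsh]

lemma walsh_out : ∀ l (x : ℝ), ¬(0 ≤ x ∧ x < 1) → walsh l x = 0 := by
  intro l
  induction l using Nat.strong_induction_on with
  | _ l ih =>
    match l with
    | 0 => intro x hx; simp [walsh_zero_eq, hx]
    | l+1 =>
      intro x hx
      rw [walsh_succ_eq]
      by_cases h : x < 1/2
      · rw [if_pos h]
        refine ih _ (by omega) _ ?_
        rintro ⟨h1, h2⟩
        exact hx ⟨by linarith, by linarith⟩
      · rw [if_neg h]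
        push_neg at h
        rw [ih _ (by omega) (2*x-1) ?_, mul_zero]
        rintro ⟨h1, h2⟩
        exact hx ⟨by linarith, by linarith⟩

lemma walsh_left (l : ℕ) (x : ℝ) (h0 : 0 ≤ x) (h1 : x < 1/2) :
    walsh l x = walsh (l/2) (2*x) := by
  match l with
  | 0 =>
    rw [Nat.zero_div, walsh_zero_eq, walsh_zero_eq,
      if_pos ⟨h0, by linarith⟩, if_pos ⟨by linarith, by linarith⟩]
  | l+1 => rw [walsh_succ_eq, if_pos h1]

lemma walsh_right (l : ℕ) (x : ℝ) (h0 : 1/2 ≤ x) (h1 : x < 1) :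
    walsh l x = (if l % 2 = 0 then (1:ℝ) else -1) * walsh (l/2) (2*x - 1) := by
  match l with
  | 0 =>
    have hx1 : (0:ℝ) ≤ x ∧ x < 1 := ⟨by linarith, h1⟩
    have hx2 : (0:ℝ) ≤ 2*x - 1 ∧ 2*x - 1 < 1 := ⟨by linarith, by linarith⟩
    rw [Nat.zero_div, walsh_zero_eq, walsh_zero_eq, if_pos hx1, if_pos hx2]
    norm_num
  | l+1 => rw [walsh_succ_eq, if_neg (not_lt.mpr h0)]

lemma xor_div_two (l m : ℕ) : (l ^^^ m) / 2 = l / 2 ^^^ m / 2 := by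
  apply Nat.eq_of_testBit_eq
  intro i
  simp [Nat.testBit_div_two, Nat.testBit_xor]

lemma walsh_mul_aux : ∀ n l m, l + m ≤ n → ∀ x : ℝ, walsh l x * walsh m x = walsh (l ^^^ m) x := by
  intro n
  induction n with
  | zero =>
    intro l m h x
    have hl : l = 0 := by omega
    have hm : m = 0 := by omega
    subst hl; subst hm
    by_cases hx : 0 ≤ x ∧ x < 1 <;> simp [walsh_zero_eq, hx]
  | succ n ih =>
    intro l m h x
    match l, m with
    | 0, m =>
      by_cases hx : 0 ≤ x ∧ x < 1
      · rw [walsh_zero_eq, if_pos hx, one_mul, Nat.zero_xor]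
      · rw [walsh_out 0 x hx, zero_mul, Nat.zero_xor, walsh_out m x hx]
    | l+1, 0 =>
      by_cases hx : 0 ≤ x ∧ x < 1
      · rw [walsh_zero_eq, if_pos hx, mul_one, Nat.xor_zero]
      · rw [walsh_out (l+1) x hx, zero_mul, Nat.xor_zero, walsh_out (l+1) x hx]
    | l+1, m+1 =>
      by_cases hx : 0 ≤ x ∧ x < 1
      · by_cases hx2 : x < 1/2
        · rw [walsh_left (l+1) x hx.1 hx2, walsh_left (m+1) x hx.1 hx2,
            walsh_left ((l+1)^^^(m+1)) x hx.1 hx2, xor_div_two]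
          exact ih _ _ (by omega) _
        · push_neg at hx2
          rw [walsh_right (l+1) x hx2 hx.2, walsh_right (m+1) x hx2 hx.2,
            walsh_right ((l+1)^^^(m+1)) x hx2 hx.2, xor_div_two]
          have hh := ih ((l+1)/2) ((m+1)/2) (by omega) (2*x-1)
          have hp : ((l+1) ^^^ (m+1)) % 2 = ((l+1) % 2 + (m+1) % 2) % 2 := by
            rw [Nat.xor_mod_two_eq, Nat.add_mod]
          have hs : (if ((l+1)^^^(m+1)) % 2 = 0 then (1:ℝ) else -1)
              = (if (l+1) % 2 = 0 then (1:ℝ) else -1) * (if (m+1) % 2 = 0 then (1:ℝ) else -1) := by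
            rcases Nat.mod_two_eq_zero_or_one (l+1) with h1 | h1 <;>
            rcases Nat.mod_two_eq_zero_or_one (m+1) with h2 | h2 <;>
            rw [h1, h2] at hp ⊢ <;> rw [hp] <;> norm_num
          rw [hs, ← hh]
          ring
      · rw [walsh_out (l+1) x hx, zero_mul, walsh_out ((l+1)^^^(m+1)) x hx]

lemma walsh_mul (l m : ℕ) (x : ℝ) : walsh l x * walsh m x = walsh (l ^^^ m) x :=
  walsh_mul_aux (l+m) l m le_rfl x

lemma walsh_abs_le (l : ℕ) (x : ℝ) : |walsh l x| ≤ 1 := by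
  rw [← sq_le_one_iff_abs_le_one, sq, walsh_mul, Nat.xor_self, walsh_zero_eq]
  by_cases hx : 0 ≤ x ∧ x < 1 <;> simp [hx]

lemma walsh_measurable : ∀ l, Measurable (walsh l) := by
  intro l
  induction l using Nat.strong_induction_on with
  | _ l ih =>
    match l with
    | 0 =>
      have : walsh 0 = Set.indicator (Set.Ico (0:ℝ) 1) (fun _ => (1:ℝ)) := by
        funext x
        rw [walsh_zero_eq, Set.indicator_apply]
        simp [Set.mem_Ico]
      rw [this]
      exact measurable_const.indicator measurableSet_Ico
    | l+1 =>
      have h1 : Measurable (walsh ((l+1)/2)) := ih _ (by omega)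
      have heq : walsh (l+1) = fun x => if x < 1/2 then walsh ((l+1)/2) (2*x)
          else (if (l+1)%2 = 0 then (1:ℝ) else -1) * walsh ((l+1)/2) (2*x-1) := by
        funext x; rw [walsh_succ_eq]
      rw [heq]
      exact Measurable.ite (measurableSet_lt measurable_id measurable_const)
        (h1.comp (measurable_id.const_mul 2))
        ((h1.comp ((measurable_id.const_mul 2).sub measurable_const)).const_mul _)

end Aux
section Aux2
open Real MeasureTheory Filter Finset

lemma integrableOn_of_bdd {f : ℝ → ℝ} (hf : Measurable f) {M : ℝ} (hb : ∀ x, |f x| ≤ M)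
    {s : Set ℝ} (hs : volume s ≠ ⊤) : IntegrableOn f s := by
  refine Measure.integrableOn_of_bounded (M := M) hs hf.aestronglyMeasurable ?_
  exact ae_of_all _ (fun x => by simpa [Real.norm_eq_abs] using hb x)

lemma walsh_integrableOn (l : ℕ) {s : Set ℝ} (hs : volume s ≠ ⊤) :
    IntegrableOn (walsh l) s :=
  integrableOn_of_bdd (walsh_measurable l) (walsh_abs_le l) hs

lemma setIntegral_Ico_comp (f : ℝ → ℝ) {c : ℝ} (hc : 0 < c) (d a b : ℝ) (hab : a ≤ b) :
    ∫ x in Set.Ico (c*a+d) (c*b+d), f x = c * ∫ x in Set.Ico a b, f (c*x + d) := by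
  rw [MeasureTheory.integral_Ico_eq_integral_Ioo, MeasureTheory.integral_Ico_eq_integral_Ioo,
    ← MeasureTheory.integral_Ioc_eq_integral_Ioo, ← MeasureTheory.integral_Ioc_eq_integral_Ioo,
    ← intervalIntegral.integral_of_le hab,
    ← intervalIntegral.integral_of_le (by nlinarith : c*a+d ≤ c*b+d),
    intervalIntegral.integral_comp_mul_add f (ne_of_gt hc) d, smul_eq_mul]
  rw [← mul_assoc, mul_inv_cancel₀ (ne_of_gt hc), one_mul]

lemma half_left (f : ℝ → ℝ) :
    ∫ x in Set.Ico (0:ℝ) 1, f x = 2 * ∫ x in Set.Ico (0:ℝ) (1/2), f (2*x) := by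
  have h := setIntegral_Ico_comp f two_pos 0 0 (1/2) (by norm_num)
  norm_num at h
  exact h

lemma half_right (f : ℝ → ℝ) :
    ∫ x in Set.Ico (0:ℝ) 1, f x = 2 * ∫ x in Set.Ico (1/2:ℝ) 1, f (2*x - 1) := by
  have h := setIntegral_Ico_comp f two_pos (-1) (1/2) 1 (by norm_num)
  norm_num [sub_eq_add_neg] at h
  exact h

lemma dyad_subst (f : ℝ → ℝ) (j k : ℕ) :
    ∫ y in dyadI j k, f y = ((2:ℝ)^j)⁻¹ * ∫ x in Set.Ico (0:ℝ) 1, f ((x + k)/2^j) := by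
  have hc : (0:ℝ) < ((2:ℝ)^j)⁻¹ := by positivity
  have h := setIntegral_Ico_comp f hc ((k:ℝ)/2^j) 0 1 zero_le_one
  have e0 : ((2:ℝ)^j)⁻¹*0 + (k:ℝ)/2^j = (k:ℝ)/2^j := by ring
  have e1 : ((2:ℝ)^j)⁻¹*1 + (k:ℝ)/2^j = ((k:ℝ)+1)/2^j := by ring
  rw [e0, e1] at h
  rw [show dyadI j k = Set.Ico ((k:ℝ)/2^j) (((k:ℝ)+1)/2^j) from rfl, h]
  congr 1
  refine MeasureTheory.setIntegral_congr_fun measurableSet_Ico (fun x _ => ?_)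
  congr 1
  ring

lemma walsh_integral : ∀ n, ∫ x in Set.Ico (0:ℝ) 1, walsh n x = if n = 0 then 1 else 0 := by
  intro n
  induction n using Nat.strong_induction_on with
  | _ n ih =>
    match n with
    | 0 =>
      rw [if_pos rfl,
        MeasureTheory.setIntegral_congr_fun (g := fun _ => (1:ℝ)) measurableSet_Ico
          (fun x hx => by rw [walsh_zero_eq, if_pos ⟨hx.1, hx.2⟩])]
      simp
    | n+1 =>
      rw [if_neg (Nat.succ_ne_zero n)]
      have hsplit : Set.Ico (0:ℝ) 1 = Set.Ico (0:ℝ) (1/2) ∪ Set.Ico (1/2:ℝ) 1 :=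
        (Set.Ico_union_Ico_eq_Ico (by norm_num) (by norm_num)).symm
      rw [hsplit, MeasureTheory.setIntegral_union Set.Ico_disjoint_Ico_same
        measurableSet_Ico (walsh_integrableOn _ (by simp)) (walsh_integrableOn _ (by simp))]
      have hL : ∫ x in Set.Ico (0:ℝ) (1/2), walsh (n+1) x
          = ∫ x in Set.Ico (0:ℝ) (1/2), walsh ((n+1)/2) (2*x) :=
        MeasureTheory.setIntegral_congr_fun measurableSet_Ico
          (fun x hx => walsh_left _ x hx.1 hx.2)
      have hR : ∫ x in Set.Ico (1/2:ℝ) 1, walsh (n+1) x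
          = ∫ x in Set.Ico (1/2:ℝ) 1,
              (if (n+1) % 2 = 0 then (1:ℝ) else -1) * walsh ((n+1)/2) (2*x - 1) :=
        MeasureTheory.setIntegral_congr_fun measurableSet_Ico
          (fun x hx => walsh_right _ x hx.1 hx.2)
      rw [hL, hR, MeasureTheory.integral_const_mul]
      have hIL : ∫ x in Set.Ico (0:ℝ) (1/2), walsh ((n+1)/2) (2*x)
          = (∫ x in Set.Ico (0:ℝ) 1, walsh ((n+1)/2) x)/2 := by
        have := half_left (walsh ((n+1)/2)); linarith
      have hIR : ∫ x in Set.Ico (1/2:ℝ) 1, walsh ((n+1)/2) (2*x - 1)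
          = (∫ x in Set.Ico (0:ℝ) 1, walsh ((n+1)/2) x)/2 := by
        have := half_right (walsh ((n+1)/2)); linarith
      rw [hIL, hIR]
      rcases Nat.mod_two_eq_zero_or_one (n+1) with hpar | hpar
      · rw [if_pos hpar, ih ((n+1)/2) (by omega), if_neg (by omega)]
        ring
      · rw [if_neg (by omega)]
        ring

end Aux2
section Aux3
open Real MeasureTheory Filter Finset

lemma walsh_scale : ∀ j k l : ℕ, k < 2^j → ∃ ε : ℝ, (ε = 1 ∨ ε = -1) ∧ (k = 0 → ε = 1) ∧
    ∀ x : ℝ, 0 ≤ x → x < 1 → walsh l ((x + k)/2^j) = ε * walsh (l / 2^j) x := by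
  intro j
  induction j with
  | zero =>
    intro k l hk
    have hk0 : k = 0 := by omega
    subst hk0
    refine ⟨1, Or.inl rfl, fun _ => rfl, fun x _ _ => ?_⟩
    norm_num
  | succ j ih =>
    intro k l hk
    have h2j : (0:ℝ) < 2^j := by positivity
    have hpow : (2:ℝ)^(j+1) = 2 * 2^j := by ring
    have hdiv : l / 2 / 2^j = l / 2^(j+1) := by
      rw [Nat.div_div_eq_div_mul, pow_succ, mul_comm 2 (2^j)]
    by_cases hk2 : k < 2^j
    · obtain ⟨ε, hε, hε0, hval⟩ := ih k (l/2) hk2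
      refine ⟨ε, hε, hε0, fun x h0 h1 => ?_⟩
      have hkR : (k:ℝ) + 1 ≤ 2^j := by exact_mod_cast Nat.succ_le_of_lt hk2
      have hy0 : 0 ≤ (x + k)/2^(j+1) := by positivity
      have hy1 : (x + k)/2^(j+1) < 1/2 := by
        rw [div_lt_iff₀ (by positivity), hpow]
        nlinarith
      have harg : 2 * ((x + k)/2^(j+1)) = (x + k)/2^j := by
        rw [hpow]; ring
      rw [walsh_left l _ hy0 hy1, harg, hval x h0 h1, hdiv]
    · push_neg at hk2
      have hk' : k - 2^j < 2^j := by omega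
      obtain ⟨ε, hε, _, hval⟩ := ih (k - 2^j) (l/2) hk'
      refine ⟨(if l % 2 = 0 then (1:ℝ) else -1) * ε, ?_, ?_, ?_⟩
      · rcases Nat.mod_two_eq_zero_or_one l with h2 | h2 <;> rcases hε with h | h <;>
          rw [h2, h] <;> norm_num
      · intro h
        exfalso
        have := Nat.one_le_two_pow (n := j)
        omega
      · intro x h0 h1
        have hkR : (2:ℝ)^j ≤ (k:ℝ) := by exact_mod_cast hk2
        have hkR2 : (k:ℝ) + 1 ≤ 2^(j+1) := by exact_mod_cast Nat.succ_le_of_lt hk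
        have hy0 : 1/2 ≤ (x + k)/2^(j+1) := by
          rw [le_div_iff₀ (by positivity), hpow]
          nlinarith
        have hy1 : (x + k)/2^(j+1) < 1 := by
          rw [div_lt_one (by positivity)]
          nlinarith
        have hcast : ((k - 2^j : ℕ) : ℝ) = (k:ℝ) - 2^j := by
          push_cast [Nat.cast_sub hk2]
          norm_num
        have harg : 2 * ((x + k)/2^(j+1)) - 1 = (x + ((k - 2^j : ℕ) : ℝ))/2^j := by
          rw [hcast, hpow]
          field_simp
          ring
        rw [walsh_right l _ hy0 hy1, harg, hval x h0 h1, hdiv, mul_assoc]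

lemma walsh_dyadI (j k l : ℕ) (hk : k < 2^j) :
    ∃ ε : ℝ, (ε = 1 ∨ ε = -1) ∧ (k = 0 → ε = 1) ∧
      ∫ x in dyadI j k, walsh l x = (if l < 2^j then ε else 0) / 2^j := by
  obtain ⟨ε, hε, hε0, hval⟩ := walsh_scale j k l hk
  refine ⟨ε, hε, hε0, ?_⟩
  rw [dyad_subst (walsh l) j k,
    MeasureTheory.setIntegral_congr_fun (g := fun x => ε * walsh (l/2^j) x) measurableSet_Ico
      (fun x hx => hval x hx.1 hx.2),
    MeasureTheory.integral_const_mul, walsh_integral]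
  have hiff : l / 2^j = 0 ↔ l < 2^j := Nat.div_eq_zero_iff_lt (by positivity)
  by_cases hl : l < 2^j
  · rw [if_pos hl, if_pos (hiff.mpr hl)]
    rw [mul_one, div_eq_inv_mul]
  · rw [if_neg hl, if_neg (fun h => hl (hiff.mp h))]
    simp

end Aux3
section Aux4
open Real MeasureTheory Filter Finset

/-- The extremizing family. -/
noncomputable def rho (j₀ : ℕ) : ℝ → ℝ := fun x =>
  ((2:ℝ)^j₀ * (j₀+1))⁻¹ * ∑ l ∈ Finset.range (2^j₀), Real.sqrt l * walsh l x

lemma rho_measurable (j₀ : ℕ) : Measurable (rho j₀) := by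
  unfold rho
  exact (Finset.measurable_sum _ (fun l _ => (walsh_measurable l).const_mul _)).const_mul _

lemma rho_bdd (j₀ : ℕ) : ∀ x, |rho j₀ x| ≤ ∑ l ∈ Finset.range (2^j₀), Real.sqrt l := by
  intro x
  unfold rho
  rw [abs_mul]
  have h1 : |((2:ℝ)^j₀ * (j₀+1))⁻¹| ≤ 1 := by
    rw [abs_of_nonneg (by positivity)]
    rw [inv_le_one_iff₀]
    right
    have h2 : (1:ℝ) ≤ 2^j₀ := by
      have : (0:ℕ) < 2^j₀ := Nat.pow_pos (by norm_num)
      exact_mod_cast this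
    nlinarith [(Nat.cast_nonneg j₀ : (0:ℝ) ≤ j₀)]
  calc |((2:ℝ)^j₀ * (j₀+1))⁻¹| * |∑ l ∈ Finset.range (2^j₀), Real.sqrt l * walsh l x|
      ≤ 1 * |∑ l ∈ Finset.range (2^j₀), Real.sqrt l * walsh l x| := by
        apply mul_le_mul_of_nonneg_right h1 (abs_nonneg _)
    _ ≤ ∑ l ∈ Finset.range (2^j₀), Real.sqrt l := by
        rw [one_mul]
        refine (Finset.abs_sum_le_sum_abs _ _).trans (Finset.sum_le_sum fun l _ => ?_)
        rw [abs_mul, abs_of_nonneg (Real.sqrt_nonneg _)]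
        calc Real.sqrt l * |walsh l x| ≤ Real.sqrt l * 1 :=
              mul_le_mul_of_nonneg_left (walsh_abs_le l x) (Real.sqrt_nonneg _)
          _ = Real.sqrt l := mul_one _

lemma rho_integrableOn (j₀ : ℕ) {s : Set ℝ} (hs : volume s ≠ ⊤) : IntegrableOn (rho j₀) s :=
  integrableOn_of_bdd (rho_measurable j₀) (rho_bdd j₀) hs

lemma rho_memLp (j₀ : ℕ) : MemLp (rho j₀) 2 (volume.restrict (Set.Ico (0:ℝ) 1)) := by
  haveI : IsFiniteMeasure (volume.restrict (Set.Ico (0:ℝ) 1)) := by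
    constructor
    rw [Measure.restrict_apply_univ, Real.volume_Ico]
    exact ENNReal.ofReal_lt_top
  exact MemLp.of_bound (rho_measurable j₀).aestronglyMeasurable _
    (ae_of_all _ (fun x => by simpa [Real.norm_eq_abs] using rho_bdd j₀ x))

lemma wCoef_rho (j₀ l : ℕ) (hl : l ∈ Finset.range (2^j₀)) :
    wCoef (rho j₀) l = ((2:ℝ)^j₀ * (j₀+1))⁻¹ * Real.sqrt l := by
  unfold wCoef
  have hrw : ∀ x : ℝ, rho j₀ x * walsh l x
      = ((2:ℝ)^j₀*(j₀+1))⁻¹ * ∑ m ∈ Finset.range (2^j₀), Real.sqrt m * walsh (m ^^^ l) x := by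
    intro x
    unfold rho
    rw [mul_assoc, Finset.sum_mul]
    congr 1
    refine Finset.sum_congr rfl (fun m _ => ?_)
    rw [mul_assoc, walsh_mul]
  simp_rw [hrw]
  rw [MeasureTheory.integral_const_mul]
  congr 1
  rw [MeasureTheory.integral_finset_sum _ (fun m _ =>
    ((walsh_integrableOn (m ^^^ l) (by simp)).const_mul _))]
  have : ∀ m ∈ Finset.range (2^j₀),
      ∫ x in Set.Ico (0:ℝ) 1, Real.sqrt m * walsh (m ^^^ l) x
        = if m = l then Real.sqrt m else 0 := by
    intro m _
    rw [MeasureTheory.integral_const_mul, walsh_integral]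
    by_cases h : m = l
    · rw [if_pos h, if_pos (by rw [h, Nat.xor_self]), mul_one]
    · rw [if_neg h, if_neg (fun hh => h (by have hx := congrArg (· ^^^ l) hh; simpa [Nat.xor_assoc, Nat.xor_self] using hx)), mul_zero]
  rw [Finset.sum_congr rfl this, Finset.sum_ite_eq' _ l (fun m => Real.sqrt m), if_pos hl]

lemma harmonic_le : ∀ n : ℕ, ∑ l ∈ Finset.range (2^n), (1:ℝ)/(l+1) ≤ n+1 := by
  intro n
  induction n with
  | zero => norm_num
  | succ n ih =>
    rw [Finset.range_eq_Ico, ← Finset.sum_Ico_consecutive _ (Nat.zero_le (2^n))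
      (Nat.pow_le_pow_right (by norm_num) (by omega)), ← Finset.range_eq_Ico]
    have h2 : ∑ l ∈ (Finset.Ico (2^n) (2^(n+1)) : Finset ℕ), (1:ℝ)/(l+1) ≤ 1 := by
      have hcard : ((Finset.Ico (2^n) (2^(n+1)) : Finset ℕ)).card = 2^n := by
        rw [Nat.card_Ico, Nat.pow_succ]
        omega
      have hb : ∀ l ∈ (Finset.Ico (2^n) (2^(n+1)) : Finset ℕ), (1:ℝ)/(l+1) ≤ ((2:ℝ)^n)⁻¹ := by
        intro l hl
        have hl' := (Finset.mem_Ico.mp hl).1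
        have hcast : (2:ℝ)^n ≤ (l:ℝ)+1 := by
          have : ((2^n : ℕ):ℝ) ≤ (l:ℝ) := by exact_mod_cast hl'
          push_cast at this
          linarith
        rw [one_div]
        exact inv_anti₀ (by positivity) hcast
      calc ∑ l ∈ (Finset.Ico (2^n) (2^(n+1)) : Finset ℕ), (1:ℝ)/(l+1)
          ≤ ∑ _l ∈ (Finset.Ico (2^n) (2^(n+1)) : Finset ℕ), ((2:ℝ)^n)⁻¹ := Finset.sum_le_sum hb
        _ = 1 := by
            rw [Finset.sum_const, hcard, nsmul_eq_mul]
            push_cast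
            field_simp
    have hc : ((n:ℝ)+1)+1 = ((n+1:ℕ):ℝ)+1 := by push_cast; ring
    linarith

end Aux4
section Aux5
open Real MeasureTheory Filter Finset

lemma hnormj_rho (j₀ : ℕ) : hnormj j₀ (rho j₀) ≤ 2 * ((2:ℝ)^j₀)⁻¹ := by
  unfold hnormj
  have hB : (1:ℝ) ≤ (j₀:ℝ)+1 := by
    have := (Nat.cast_nonneg j₀ : (0:ℝ) ≤ j₀); linarith
  have hsum : ∑ l ∈ Finset.range (2^j₀), (1 + (l:ℝ)^2)⁻¹ * (wCoef (rho j₀) l)^2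
      ≤ (2*((2:ℝ)^j₀)⁻¹)^2 := by
    have hterm : ∀ l ∈ Finset.range (2^j₀), (1 + (l:ℝ)^2)⁻¹ * (wCoef (rho j₀) l)^2
        ≤ (((2:ℝ)^j₀ * ((j₀:ℝ)+1))⁻¹)^2 * (2 * (1/((l:ℝ)+1))) := by
      intro l hl
      rw [wCoef_rho j₀ l hl, mul_pow, Real.sq_sqrt (Nat.cast_nonneg l)]
      have key : (1 + (l:ℝ)^2)⁻¹ * (l:ℝ) ≤ 2 * (1/((l:ℝ)+1)) := by
        rw [inv_mul_eq_div, mul_one_div, div_le_div_iff₀ (by positivity) (by positivity)]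
        nlinarith [sq_nonneg ((l:ℝ)-1), (Nat.cast_nonneg l : (0:ℝ) ≤ l)]
      calc (1 + (l:ℝ)^2)⁻¹ * ((((2:ℝ)^j₀ * ((j₀:ℝ)+1))⁻¹)^2 * (l:ℝ))
          = (((2:ℝ)^j₀ * ((j₀:ℝ)+1))⁻¹)^2 * ((1 + (l:ℝ)^2)⁻¹ * (l:ℝ)) := by ring
        _ ≤ (((2:ℝ)^j₀ * ((j₀:ℝ)+1))⁻¹)^2 * (2 * (1/((l:ℝ)+1))) :=
            mul_le_mul_of_nonneg_left key (by positivity)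
    calc ∑ l ∈ Finset.range (2^j₀), (1 + (l:ℝ)^2)⁻¹ * (wCoef (rho j₀) l)^2
        ≤ ∑ l ∈ Finset.range (2^j₀),
            (((2:ℝ)^j₀ * ((j₀:ℝ)+1))⁻¹)^2 * (2 * (1/((l:ℝ)+1))) := Finset.sum_le_sum hterm
      _ = 2 * (((2:ℝ)^j₀ * ((j₀:ℝ)+1))⁻¹)^2 * ∑ l ∈ Finset.range (2^j₀), (1:ℝ)/((l:ℝ)+1) := by
          rw [Finset.mul_sum]
          exact Finset.sum_congr rfl (fun l _ => by ring)
      _ ≤ 2 * (((2:ℝ)^j₀ * ((j₀:ℝ)+1))⁻¹)^2 * ((j₀:ℝ)+1) :=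
          mul_le_mul_of_nonneg_left (harmonic_le j₀) (by positivity)
      _ ≤ (2*((2:ℝ)^j₀)⁻¹)^2 := by
          rw [mul_inv, mul_pow, mul_pow]
          have e1 : (((j₀:ℝ)+1)⁻¹)^2 * ((j₀:ℝ)+1) = ((j₀:ℝ)+1)⁻¹ := by
            rw [sq]
            field_simp
          calc 2 * ((((2:ℝ)^j₀)⁻¹)^2 * (((j₀:ℝ)+1)⁻¹)^2) * ((j₀:ℝ)+1)
              = 2 * (((2:ℝ)^j₀)⁻¹)^2 * ((((j₀:ℝ)+1)⁻¹)^2 * ((j₀:ℝ)+1)) := by ring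
            _ = 2 * (((2:ℝ)^j₀)⁻¹)^2 * ((j₀:ℝ)+1)⁻¹ := by rw [e1]
            _ ≤ 2^2 * (((2:ℝ)^j₀)⁻¹)^2 := by
                have h1 : ((j₀:ℝ)+1)⁻¹ ≤ 1 := by
                  rw [inv_le_one_iff₀]; right; exact hB
                nlinarith [sq_nonneg (((2:ℝ)^j₀)⁻¹)]
  have h0 : (0:ℝ) ≤ ∑ l ∈ Finset.range (2^j₀), (1 + (l:ℝ)^2)⁻¹ * (wCoef (rho j₀) l)^2 :=
    Finset.sum_nonneg (fun l _ => by positivity)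
  calc (∑ l ∈ Finset.range (2^j₀), (1 + (l:ℝ)^2)⁻¹ * (wCoef (rho j₀) l)^2) ^ (1/2:ℝ)
      ≤ ((2*((2:ℝ)^j₀)⁻¹)^2) ^ (1/2:ℝ) := Real.rpow_le_rpow h0 hsum (by norm_num)
    _ = 2*((2:ℝ)^j₀)⁻¹ := by
        rw [← Real.sqrt_eq_rpow, Real.sqrt_sq (by positivity)]

/-- Sum of `√l` over `l < 2^j`. -/
noncomputable def Sj (j : ℕ) : ℝ := ∑ l ∈ Finset.range (2^j), Real.sqrt l

lemma Sj_nonneg (j : ℕ) : 0 ≤ Sj j := Finset.sum_nonneg (fun l _ => Real.sqrt_nonneg _)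

lemma key_eq (j₀ j k : ℕ) (hj : j ≤ j₀) (hk : k < 2^j) :
    ∃ ε : ℕ → ℝ, (∀ l, ε l = 1 ∨ ε l = -1) ∧ (k = 0 → ∀ l, ε l = 1) ∧
      ∫ x in dyadI j k, rho j₀ x
        = ((2:ℝ)^j₀ * ((j₀:ℝ)+1))⁻¹ * (((2:ℝ)^j)⁻¹
            * ∑ l ∈ Finset.range (2^j), Real.sqrt l * ε l) := by
  choose ε hε1 hε2 hεint using fun l => walsh_dyadI j k l hk
  refine ⟨ε, hε1, fun h l => hε2 l h, ?_⟩
  have hfin : volume (dyadI j k) ≠ ⊤ := by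
    rw [show dyadI j k = Set.Ico ((k:ℝ)/2^j) (((k:ℝ)+1)/2^j) from rfl, Real.volume_Ico]
    exact ENNReal.ofReal_ne_top
  unfold rho
  rw [MeasureTheory.integral_const_mul,
    MeasureTheory.integral_finset_sum _ (fun l _ => (walsh_integrableOn l hfin).const_mul _)]
  congr 1
  simp_rw [MeasureTheory.integral_const_mul, hεint]
  have hss : Finset.range (2^j) ⊆ Finset.range (2^j₀) :=
    Finset.range_subset_range.mpr (Nat.pow_le_pow_right (by norm_num) hj)
  rw [← Finset.sum_subset hss (fun l _ hl => by
    rw [if_neg (by simpa using hl), zero_div, mul_zero])]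
  rw [Finset.mul_sum]
  refine Finset.sum_congr rfl (fun l hl => ?_)
  rw [if_pos (Finset.mem_range.mp hl)]
  ring

lemma gd_bound (j₀ j : ℕ) (hj : j ≤ j₀) (k : ℕ) (hk : k < 2^j) :
    (2:ℝ)^j * |∫ x in dyadI j k, rho j₀ x| ≤ ((2:ℝ)^j₀ * ((j₀:ℝ)+1))⁻¹ * Sj j := by
  obtain ⟨ε, hε1, _, heq⟩ := key_eq j₀ j k hj hk
  have h2j : (0:ℝ) < 2^j := by positivity
  have hSS : |∑ l ∈ Finset.range (2^j), Real.sqrt l * ε l| ≤ Sj j := by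
    refine (Finset.abs_sum_le_sum_abs _ _).trans ?_
    refine Finset.sum_le_sum (fun l _ => ?_)
    rw [abs_mul, abs_of_nonneg (Real.sqrt_nonneg _)]
    rcases hε1 l with h | h <;> rw [h] <;> norm_num
  rw [heq, abs_mul, abs_mul, abs_of_nonneg (le_of_lt (by positivity : (0:ℝ) <
    ((2:ℝ)^j₀ * ((j₀:ℝ)+1))⁻¹)), abs_of_nonneg (le_of_lt (by positivity : (0:ℝ) < ((2:ℝ)^j)⁻¹))]
  have h1 : (2:ℝ)^j * ((2:ℝ)^j)⁻¹ = 1 := mul_inv_cancel₀ (ne_of_gt h2j)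
  calc (2:ℝ)^j * (((2:ℝ)^j₀ * ((j₀:ℝ)+1))⁻¹ * (((2:ℝ)^j)⁻¹
        * |∑ l ∈ Finset.range (2^j), Real.sqrt l * ε l|))
      = ((2:ℝ)^j * ((2:ℝ)^j)⁻¹) * (((2:ℝ)^j₀ * ((j₀:ℝ)+1))⁻¹
        * |∑ l ∈ Finset.range (2^j), Real.sqrt l * ε l|) := by ring
    _ = ((2:ℝ)^j₀ * ((j₀:ℝ)+1))⁻¹ * |∑ l ∈ Finset.range (2^j), Real.sqrt l * ε l| := by
        rw [h1, one_mul]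
    _ ≤ ((2:ℝ)^j₀ * ((j₀:ℝ)+1))⁻¹ * Sj j := mul_le_mul_of_nonneg_left hSS (by positivity)

lemma gdyad_rho (j₀ j : ℕ) (hj : j ≤ j₀) :
    gdyad j (rho j₀) = ((2:ℝ)^j₀ * ((j₀:ℝ)+1))⁻¹ * Sj j := by
  unfold gdyad
  have h2j : (0:ℝ) < 2^j := by positivity
  have h0 : (0:ℕ) < 2^j := Nat.pow_pos (by norm_num)
  apply le_antisymm
  · exact ciSup_le (fun k => gd_bound j₀ j hj k k.isLt)
  · have hBdd : BddAbove (Set.range fun k : Fin (2^j) =>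
        (2:ℝ)^j * |∫ x in dyadI j (k:ℕ), rho j₀ x|) := by
      refine ⟨((2:ℝ)^j₀ * ((j₀:ℝ)+1))⁻¹ * Sj j, ?_⟩
      rintro _ ⟨k, rfl⟩
      exact gd_bound j₀ j hj k k.isLt
    refine le_trans (le_of_eq ?_) (le_ciSup hBdd (⟨0, h0⟩ : Fin (2^j)))
    show ((2:ℝ)^j₀ * ((j₀:ℝ)+1))⁻¹ * Sj j = (2:ℝ)^j * |∫ x in dyadI j (0:ℕ), rho j₀ x|
    obtain ⟨ε, _, hone, heq⟩ := key_eq j₀ j 0 hj h0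
    have hSS : ∑ l ∈ Finset.range (2^j), Real.sqrt l * ε l = Sj j := by
      unfold Sj
      exact Finset.sum_congr rfl (fun l _ => by rw [hone rfl l, mul_one])
    rw [heq, hSS, abs_of_nonneg (mul_nonneg (by positivity)
      (mul_nonneg (by positivity) (Sj_nonneg j)))]
    have h1 : (2:ℝ)^j * ((2:ℝ)^j)⁻¹ = 1 := mul_inv_cancel₀ (ne_of_gt h2j)
    calc ((2:ℝ)^j₀ * ((j₀:ℝ)+1))⁻¹ * Sj j
        = ((2:ℝ)^j * ((2:ℝ)^j)⁻¹) * (((2:ℝ)^j₀ * ((j₀:ℝ)+1))⁻¹ * Sj j) := by rw [h1, one_mul]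
      _ = (2:ℝ)^j * (((2:ℝ)^j₀ * ((j₀:ℝ)+1))⁻¹ * (((2:ℝ)^j)⁻¹ * Sj j)) := by ring

end Aux5
section Aux6
open Real MeasureTheory Filter Finset

lemma Sj_le (j : ℕ) : Sj j ≤ (2:ℝ)^j * Real.sqrt ((2:ℝ)^j) := by
  unfold Sj
  calc ∑ l ∈ Finset.range (2^j), Real.sqrt l
      ≤ ∑ _l ∈ Finset.range (2^j), Real.sqrt ((2:ℝ)^j) := by
        refine Finset.sum_le_sum (fun l hl => Real.sqrt_le_sqrt ?_)
        have : (l:ℝ) ≤ ((2^j : ℕ):ℝ) := Nat.cast_le.mpr (le_of_lt (Finset.mem_range.mp hl))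
        push_cast at this
        linarith
    _ = (2:ℝ)^j * Real.sqrt ((2:ℝ)^j) := by
        rw [Finset.sum_const, Finset.card_range, nsmul_eq_mul]
        push_cast
        ring

lemma Sj_ge (j : ℕ) (hj : 1 ≤ j) : (2:ℝ)^j * Real.sqrt ((2:ℝ)^j) ≤ 4 * Sj j := by
  obtain ⟨m, rfl⟩ : ∃ m, j = m+1 := ⟨j-1, by omega⟩
  have h1 : ((2:ℝ)^m) * Real.sqrt ((2:ℝ)^m) ≤ Sj (m+1) := by
    unfold Sj
    have hsub : (Finset.Ico (2^m) (2^(m+1)) : Finset ℕ) ⊆ Finset.range (2^(m+1)) := by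
      intro l hl
      rw [Finset.mem_range]
      exact (Finset.mem_Ico.mp hl).2
    have hcard : (Finset.Ico (2^m) (2^(m+1)) : Finset ℕ).card = 2^m := by
      rw [Nat.card_Ico, Nat.pow_succ]
      omega
    calc (2:ℝ)^m * Real.sqrt ((2:ℝ)^m) = (2^m : ℕ) • Real.sqrt ((2:ℝ)^m) := by
          rw [nsmul_eq_mul]; push_cast; ring
      _ ≤ ∑ l ∈ (Finset.Ico (2^m) (2^(m+1)) : Finset ℕ), Real.sqrt l := by
          have hb := Finset.card_nsmul_le_sum (Finset.Ico (2^m) (2^(m+1)) : Finset ℕ)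
            (fun l => Real.sqrt (l:ℝ)) (Real.sqrt ((2:ℝ)^m)) (fun l hl => Real.sqrt_le_sqrt (by
              have : ((2^m:ℕ):ℝ) ≤ (l:ℝ) := Nat.cast_le.mpr (Finset.mem_Ico.mp hl).1
              push_cast at this
              linarith))
          rw [hcard] at hb
          exact hb
      _ ≤ ∑ l ∈ Finset.range (2^(m+1)), Real.sqrt l :=
          Finset.sum_le_sum_of_subset_of_nonneg hsub (fun l _ _ => Real.sqrt_nonneg _)
  have hs2 : Real.sqrt 2 ≤ 2 := by
    nlinarith [Real.sq_sqrt (by norm_num : (0:ℝ) ≤ 2), Real.sqrt_nonneg 2]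
  have hsplit : Real.sqrt ((2:ℝ)^(m+1)) = Real.sqrt 2 * Real.sqrt ((2:ℝ)^m) := by
    rw [← Real.sqrt_mul (by norm_num : (0:ℝ) ≤ 2)]
    congr 1
    ring
  calc (2:ℝ)^(m+1) * Real.sqrt ((2:ℝ)^(m+1))
      = 2 * (2:ℝ)^m * (Real.sqrt 2 * Real.sqrt ((2:ℝ)^m)) := by rw [hsplit]; ring
    _ = (2 * Real.sqrt 2) * ((2:ℝ)^m * Real.sqrt ((2:ℝ)^m)) := by ring
    _ ≤ 4 * ((2:ℝ)^m * Real.sqrt ((2:ℝ)^m)) := by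
        refine mul_le_mul_of_nonneg_right (by linarith) ?_
        exact mul_nonneg (le_of_lt (pow_pos (two_pos:(0:ℝ)<2) m)) (Real.sqrt_nonneg _)
    _ ≤ 4 * Sj (m+1) := by linarith

lemma mul_sqrt_mono {a b : ℝ} (ha : 0 ≤ a) (hab : a ≤ b) :
    a * Real.sqrt a ≤ b * Real.sqrt b :=
  mul_le_mul hab (Real.sqrt_le_sqrt hab) (Real.sqrt_nonneg a) (le_trans ha hab)

lemma pow32 (x : ℝ) : (2:ℝ)^(x:ℝ) * Real.sqrt ((2:ℝ)^(x:ℝ)) = (2:ℝ)^(3/2*x : ℝ) := by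
  rw [Real.sqrt_eq_rpow, ← Real.rpow_mul (by norm_num : (0:ℝ) ≤ 2),
    ← Real.rpow_add (by norm_num : (0:ℝ) < 2)]
  congr 1
  ring

lemma conv_pow (c : ℝ) (n : ℕ) : (2:ℝ)^(c*(n:ℝ)) = ((2:ℝ)^(c:ℝ))^(n:ℕ) := by
  rw [← Real.rpow_natCast ((2:ℝ)^(c:ℝ)) n, ← Real.rpow_mul (by norm_num : (0:ℝ) ≤ 2)]

lemma rpow2_inv_pow (n : ℕ) : ((2:ℝ)^n)⁻¹ = (2:ℝ)^(-(n:ℝ)) := by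
  rw [Real.rpow_neg (by norm_num : (0:ℝ) ≤ 2), Real.rpow_natCast]

lemma gdyad_nonneg (j : ℕ) (f : ℝ → ℝ) : 0 ≤ gdyad j f :=
  Real.iSup_nonneg (fun k => by positivity)

lemma floor_le_self (α : ℝ) (hα0 : 0 ≤ α) (hα1 : α ≤ 1) (j₀ : ℕ) : ⌊α*(j₀:ℝ)⌋₊ ≤ j₀ := by
  calc ⌊α*(j₀:ℝ)⌋₊ ≤ ⌊((j₀:ℕ):ℝ)⌋₊ :=
        Nat.floor_mono (by nlinarith [(Nat.cast_nonneg j₀ : (0:ℝ) ≤ j₀)])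
    _ = j₀ := Nat.floor_natCast j₀

lemma g_le (α : ℝ) (hα0 : 0 ≤ α) (hα1 : α ≤ 1) (j₀ : ℕ) :
    gdyad (⌊α*(j₀:ℝ)⌋₊) (rho j₀) ≤ ((2:ℝ)^j₀)⁻¹ * (2:ℝ)^(3/2*(α*(j₀:ℝ))) := by
  set j := ⌊α*(j₀:ℝ)⌋₊ with hjdef
  have hj : j ≤ j₀ := floor_le_self α hα0 hα1 j₀
  rw [gdyad_rho j₀ j hj]
  have hc : ((2:ℝ)^j₀ * ((j₀:ℝ)+1))⁻¹ ≤ ((2:ℝ)^j₀)⁻¹ := by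
    rw [mul_inv]
    have h1 : ((j₀:ℝ)+1)⁻¹ ≤ 1 := by
      rw [inv_le_one_iff₀]
      right
      have := (Nat.cast_nonneg j₀ : (0:ℝ) ≤ j₀)
      linarith
    nlinarith [inv_nonneg.mpr (le_of_lt (pow_pos (two_pos:(0:ℝ)<2) j₀))]
  have hS : Sj j ≤ (2:ℝ)^(3/2*(α*(j₀:ℝ))) := by
    calc Sj j ≤ (2:ℝ)^j * Real.sqrt ((2:ℝ)^j) := Sj_le j
      _ ≤ (2:ℝ)^(α*(j₀:ℝ):ℝ) * Real.sqrt ((2:ℝ)^(α*(j₀:ℝ):ℝ)) := by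
          refine mul_sqrt_mono (by positivity) ?_
          rw [← Real.rpow_natCast 2 j]
          exact Real.rpow_le_rpow_of_exponent_le one_le_two (Nat.floor_le (by positivity))
      _ = (2:ℝ)^(3/2*(α*(j₀:ℝ))) := pow32 _
  exact mul_le_mul hc hS (Sj_nonneg j) (by positivity)

lemma g_ge (α : ℝ) (hα0 : 0 ≤ α) (hα1 : α ≤ 1) (j₀ : ℕ) (h1 : 1 ≤ α*(j₀:ℝ)) :
    ((j₀:ℝ)+1)⁻¹ * (((2:ℝ)^j₀)⁻¹ * ((2:ℝ)^(3/2*(α*(j₀:ℝ))) / 12))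
      ≤ gdyad (⌊α*(j₀:ℝ)⌋₊) (rho j₀) := by
  set j := ⌊α*(j₀:ℝ)⌋₊ with hjdef
  have hj : j ≤ j₀ := floor_le_self α hα0 hα1 j₀
  have hj1 : 1 ≤ j := Nat.le_floor (by exact_mod_cast h1)
  rw [gdyad_rho j₀ j hj]
  have h32 : (2:ℝ)^((3:ℝ)/2) ≤ 3 := by
    have e : (2:ℝ)^((3:ℝ)/2) = Real.sqrt ((2:ℝ)^(3:ℕ)) := by
      rw [Real.sqrt_eq_rpow, ← Real.rpow_natCast 2 3, ← Real.rpow_mul (by norm_num : (0:ℝ) ≤ 2)]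
      congr 1
      norm_num
    rw [e, show ((2:ℝ)^(3:ℕ) : ℝ) = 8 by norm_num]
    calc Real.sqrt 8 ≤ Real.sqrt 9 := Real.sqrt_le_sqrt (by norm_num)
      _ = 3 := by rw [show (9:ℝ) = 3^2 by norm_num, Real.sqrt_sq (by norm_num : (0:ℝ) ≤ 3)]
  have hthird : (1:ℝ)/3 ≤ (2:ℝ)^(-(3:ℝ)/2) := by
    rw [show (-(3:ℝ)/2) = -((3:ℝ)/2) by ring, Real.rpow_neg (by norm_num : (0:ℝ) ≤ 2)]
    rw [show (1:ℝ)/3 = 3⁻¹ by norm_num]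
    exact inv_anti₀ (Real.rpow_pos_of_pos (by norm_num) _) h32
  have hS : (2:ℝ)^(3/2*(α*(j₀:ℝ)))/12 ≤ Sj j := by
    have e1 : (2:ℝ)^(3/2*(α*(j₀:ℝ) - 1)) = (2:ℝ)^(3/2*(α*(j₀:ℝ))) * (2:ℝ)^(-(3:ℝ)/2) := by
      rw [← Real.rpow_add (by norm_num : (0:ℝ) < 2)]
      congr 1
      ring
    have hX : (0:ℝ) < (2:ℝ)^(3/2*(α*(j₀:ℝ))) := Real.rpow_pos_of_pos (by norm_num) _
    have e2 : (2:ℝ)^(3/2*(α*(j₀:ℝ)))/12 ≤ (2:ℝ)^(3/2*(α*(j₀:ℝ)-1))/4 := by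
      rw [e1]
      nlinarith [hX, hthird]
    have e3 : (2:ℝ)^(3/2*(α*(j₀:ℝ)-1)) ≤ 4 * Sj j := by
      calc (2:ℝ)^(3/2*(α*(j₀:ℝ)-1))
          = (2:ℝ)^(α*(j₀:ℝ)-1 : ℝ) * Real.sqrt ((2:ℝ)^(α*(j₀:ℝ)-1 : ℝ)) := (pow32 _).symm
        _ ≤ (2:ℝ)^(j:ℕ) * Real.sqrt ((2:ℝ)^(j:ℕ)) := by
            refine mul_sqrt_mono (le_of_lt (Real.rpow_pos_of_pos (by norm_num) _)) ?_
            rw [← Real.rpow_natCast 2 j]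
            refine Real.rpow_le_rpow_of_exponent_le one_le_two ?_
            have := Nat.lt_floor_add_one (α*(j₀:ℝ))
            rw [← hjdef] at this
            linarith
        _ ≤ 4 * Sj j := Sj_ge j hj1
    linarith
  rw [mul_inv]
  calc ((j₀:ℝ)+1)⁻¹ * (((2:ℝ)^j₀)⁻¹ * ((2:ℝ)^(3/2*(α*(j₀:ℝ))) / 12))
      = (((2:ℝ)^j₀)⁻¹ * ((j₀:ℝ)+1)⁻¹) * ((2:ℝ)^(3/2*(α*(j₀:ℝ))) / 12) := by ring
    _ ≤ (((2:ℝ)^j₀)⁻¹ * ((j₀:ℝ)+1)⁻¹) * Sj j := mul_le_mul_of_nonneg_left hS (by positivity)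

lemma aux_pow_div {b : ℝ} (hb : 1 < b) {c : ℝ} (hc : 0 < c) :
    Tendsto (fun n : ℕ => c * b^n / ((n:ℝ)+1)) atTop atTop := by
  have hb0 : (0:ℝ) ≤ b := by linarith
  have hs : 1 < Real.sqrt b := by
    rw [show (1:ℝ) = Real.sqrt 1 from (Real.sqrt_one).symm]
    exact Real.sqrt_lt_sqrt zero_le_one hb
  set s := Real.sqrt b with hsdef
  set m := min 1 (s - 1) with hm
  have hm0 : 0 < m := lt_min one_pos (by linarith)
  have key : ∀ n : ℕ, (c * m) * s ^ n ≤ c * b^n / ((n:ℝ)+1) := by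
    intro n
    have hbs : b ^ n = s^n * s^n := by
      rw [← Real.mul_self_sqrt hb0, ← hsdef, mul_pow]
    have h1 : 1 + (n:ℝ) * (s-1) ≤ s ^ n := by
      have h := one_add_mul_le_pow (a := s-1) (by linarith) n
      have e : 1 + (s-1) = s := by ring
      rw [e] at h
      linarith
    have h2 : m * ((n:ℝ)+1) ≤ s ^ n := by
      have hml := min_le_left 1 (s-1)
      have hmr := min_le_right 1 (s-1)
      have hn0 : (0:ℝ) ≤ (n:ℝ) := Nat.cast_nonneg n
      calc m * ((n:ℝ)+1) = m + (n:ℝ) * m := by ring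
        _ ≤ 1 + (n:ℝ) * (s-1) := by nlinarith
        _ ≤ s^n := h1
    rw [le_div_iff₀ (by positivity)]
    have hsn : (0:ℝ) ≤ s^n := by positivity
    nlinarith [mul_le_mul_of_nonneg_left h2 (mul_nonneg (le_of_lt hc) hsn)]
  refine tendsto_atTop_mono key ?_
  exact Tendsto.const_mul_atTop (by positivity) (tendsto_pow_atTop_atTop_of_one_lt hs)

end Aux6

/-- Optimality of the dyadic thresholds `j ≤ (2/3)j₀` and `j ≤ (2/5)j₀`:
there are families `ρ₁(j₀), ρ₂(j₀) ∈ L²([0,1))` with `‖ρᵢ(j₀)‖_{h^{-1}_{j₀}} ≤ C 2^{-j₀}`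
such that, with `j = ⌊α j₀⌋`, `𝔤_j[ρ₁(j₀)] → 0` for `α < 2/3` but `𝔤_j[ρ₁(j₀)] → ∞` for
`α > 2/3`, and `2^j 𝔤_j[ρ₂(j₀)] → 0` for `α < 2/5` but `2^j 𝔤_j[ρ₂(j₀)] → ∞` for `α > 2/5`. -/
theorem dyadic_optimality :
    ∃ C : ℝ, 0 < C ∧
      ∃ ρ₁ ρ₂ : ℕ → ℝ → ℝ,
        (∀ j₀ : ℕ,
          MemLp (ρ₁ j₀) 2 (volume.restrict (Set.Ico (0:ℝ) 1)) ∧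
          MemLp (ρ₂ j₀) 2 (volume.restrict (Set.Ico (0:ℝ) 1)) ∧
          hnormj j₀ (ρ₁ j₀) ≤ C * (2:ℝ) ^ (-(j₀:ℝ)) ∧
          hnormj j₀ (ρ₂ j₀) ≤ C * (2:ℝ) ^ (-(j₀:ℝ))) ∧
        (∀ α : ℝ, 0 < α → α < 2/3 →
          Tendsto (fun j₀ : ℕ => gdyad ⌊α * (j₀:ℝ)⌋₊ (ρ₁ j₀)) atTop (nhds 0)) ∧
        (∀ α : ℝ, 2/3 < α → α < 1 →
          Tendsto (fun j₀ : ℕ => gdyad ⌊α * (j₀:ℝ)⌋₊ (ρ₁ j₀)) atTop atTop) ∧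
        (∀ α : ℝ, 0 < α → α < 2/5 →
          Tendsto (fun j₀ : ℕ =>
            (2:ℝ) ^ (⌊α * (j₀:ℝ)⌋₊ : ℝ) * gdyad ⌊α * (j₀:ℝ)⌋₊ (ρ₂ j₀)) atTop (nhds 0)) ∧
        (∀ α : ℝ, 2/5 < α → α < 1 →
          Tendsto (fun j₀ : ℕ =>
            (2:ℝ) ^ (⌊α * (j₀:ℝ)⌋₊ : ℝ) * gdyad ⌊α * (j₀:ℝ)⌋₊ (ρ₂ j₀)) atTop atTop) := by
  classical
  refine ⟨2, by norm_num, rho, rho, ?_, ?_, ?_, ?_, ?_⟩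
  · intro j₀
    have hb : hnormj j₀ (rho j₀) ≤ 2 * ((2:ℝ)^j₀)⁻¹ := hnormj_rho j₀
    rw [← rpow2_inv_pow] at *
    exact ⟨rho_memLp j₀, rho_memLp j₀, hb, hb⟩
  · -- α < 2/3 : gdyad → 0
    intro α hα0 hα1
    set B : ℝ := (2:ℝ)^(3/2*α - 1 : ℝ) with hB
    have hB0 : (0:ℝ) ≤ B := le_of_lt (Real.rpow_pos_of_pos (by norm_num) _)
    have hB1 : B < 1 := Real.rpow_lt_one_of_one_lt_of_neg one_lt_two (by linarith)
    refine squeeze_zero (fun j₀ => gdyad_nonneg _ _) (fun j₀ => ?_)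
      (tendsto_pow_atTop_nhds_zero_of_lt_one hB0 hB1)
    calc gdyad ⌊α*(j₀:ℝ)⌋₊ (rho j₀) ≤ ((2:ℝ)^j₀)⁻¹ * (2:ℝ)^(3/2*(α*(j₀:ℝ))) :=
          g_le α (le_of_lt hα0) (by linarith) j₀
      _ = B^j₀ := by
          rw [rpow2_inv_pow, ← Real.rpow_add (by norm_num : (0:ℝ) < 2), hB, ← conv_pow]
          congr 1
          ring
  · -- α > 2/3 : gdyad → ∞
    intro α hα1 hα2
    have hα0 : (0:ℝ) < α := by linarith
    set B : ℝ := (2:ℝ)^(3/2*α - 1 : ℝ) with hB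
    have hB1 : 1 < B := by
      rw [hB]
      exact (Real.one_lt_rpow_iff_of_pos (by norm_num)).mpr (Or.inl ⟨one_lt_two, by linarith⟩)
    refine tendsto_atTop_mono' atTop ?_ (aux_pow_div hB1 (show (0:ℝ) < 1/12 by norm_num))
    refine Filter.eventually_atTop.mpr ⟨⌈1/α⌉₊, fun j₀ hj₀ => ?_⟩
    have h1 : 1 ≤ α * (j₀:ℝ) := by
      have hc1 : (1:ℝ)/α ≤ (⌈1/α⌉₊:ℝ) := Nat.le_ceil _
      have hc2 : ((⌈1/α⌉₊:ℕ):ℝ) ≤ (j₀:ℝ) := Nat.cast_le.mpr hj₀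
      have h3 : (1:ℝ)/α ≤ (j₀:ℝ) := le_trans hc1 hc2
      rw [div_le_iff₀ hα0] at h3
      nlinarith
    refine le_trans ?_ (g_ge α (le_of_lt hα0) (by linarith) j₀ h1)
    have e : ((2:ℝ)^j₀)⁻¹ * (2:ℝ)^(3/2*(α*(j₀:ℝ))) = B^j₀ := by
      rw [rpow2_inv_pow, ← Real.rpow_add (by norm_num : (0:ℝ) < 2), hB, ← conv_pow]
      congr 1
      ring
    exact le_of_eq (by linear_combination (-(((j₀:ℝ)+1)⁻¹ * (1/12))) * e)
  · -- α < 2/5 : 2^j · gdyad → 0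
    intro α hα0 hα1
    set B : ℝ := (2:ℝ)^(5/2*α - 1 : ℝ) with hB
    have hB0 : (0:ℝ) ≤ B := le_of_lt (Real.rpow_pos_of_pos (by norm_num) _)
    have hB1 : B < 1 := Real.rpow_lt_one_of_one_lt_of_neg one_lt_two (by linarith)
    refine squeeze_zero (fun j₀ => mul_nonneg (Real.rpow_nonneg (by norm_num) _)
      (gdyad_nonneg _ _)) (fun j₀ => ?_)
      (tendsto_pow_atTop_nhds_zero_of_lt_one hB0 hB1)
    calc (2:ℝ)^((⌊α*(j₀:ℝ)⌋₊:ℕ):ℝ) * gdyad ⌊α*(j₀:ℝ)⌋₊ (rho j₀)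
        ≤ (2:ℝ)^(α*(j₀:ℝ)) * (((2:ℝ)^j₀)⁻¹ * (2:ℝ)^(3/2*(α*(j₀:ℝ)))) := by
          refine mul_le_mul ?_ (g_le α (le_of_lt hα0) (by linarith) j₀)
            (gdyad_nonneg _ _) (Real.rpow_nonneg (by norm_num) _)
          exact Real.rpow_le_rpow_of_exponent_le one_le_two (Nat.floor_le (by positivity))
      _ = B^j₀ := by
          rw [rpow2_inv_pow, ← Real.rpow_add (by norm_num : (0:ℝ) < 2),
            ← Real.rpow_add (by norm_num : (0:ℝ) < 2), hB, ← conv_pow]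
          congr 1
          ring
  · -- α > 2/5 : 2^j · gdyad → ∞
    intro α hα1 hα2
    have hα0 : (0:ℝ) < α := by linarith
    set B : ℝ := (2:ℝ)^(5/2*α - 1 : ℝ) with hB
    have hB1 : 1 < B := by
      rw [hB]
      exact (Real.one_lt_rpow_iff_of_pos (by norm_num)).mpr (Or.inl ⟨one_lt_two, by linarith⟩)
    refine tendsto_atTop_mono' atTop ?_ (aux_pow_div hB1 (show (0:ℝ) < 1/24 by norm_num))
    refine Filter.eventually_atTop.mpr ⟨⌈1/α⌉₊, fun j₀ hj₀ => ?_⟩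
    have h1 : 1 ≤ α * (j₀:ℝ) := by
      have hc1 : (1:ℝ)/α ≤ (⌈1/α⌉₊:ℝ) := Nat.le_ceil _
      have hc2 : ((⌈1/α⌉₊:ℕ):ℝ) ≤ (j₀:ℝ) := Nat.cast_le.mpr hj₀
      have h3 : (1:ℝ)/α ≤ (j₀:ℝ) := le_trans hc1 hc2
      rw [div_le_iff₀ hα0] at h3
      nlinarith
    have hq : (2:ℝ)^(α*(j₀:ℝ)-1) ≤ (2:ℝ)^((⌊α*(j₀:ℝ)⌋₊:ℕ):ℝ) := by
      refine Real.rpow_le_rpow_of_exponent_le one_le_two ?_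
      have := Nat.lt_floor_add_one (α*(j₀:ℝ))
      linarith
    have key : (2:ℝ)^(α*(j₀:ℝ)-1) * (((2:ℝ)^j₀)⁻¹ * (2:ℝ)^(3/2*(α*(j₀:ℝ)))) = (1/2) * B^j₀ := by
      rw [rpow2_inv_pow, ← Real.rpow_add (by norm_num : (0:ℝ) < 2),
        ← Real.rpow_add (by norm_num : (0:ℝ) < 2), hB, ← conv_pow]
      rw [show (α*(j₀:ℝ)-1) + (-(j₀:ℝ) + 3/2*(α*(j₀:ℝ)))
          = (5/2*α-1)*(j₀:ℝ) + (-1) from by ring,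
        Real.rpow_add (by norm_num : (0:ℝ) < 2), Real.rpow_neg_one]
      ring
    calc 1/24 * B^j₀ / ((j₀:ℝ)+1)
        = (2:ℝ)^(α*(j₀:ℝ)-1)
            * (((j₀:ℝ)+1)⁻¹ * (((2:ℝ)^j₀)⁻¹ * ((2:ℝ)^(3/2*(α*(j₀:ℝ)))/12))) := by
          linear_combination (-(((j₀:ℝ)+1)⁻¹ * (1/12))) * key
      _ ≤ (2:ℝ)^((⌊α*(j₀:ℝ)⌋₊:ℕ):ℝ) * gdyad ⌊α*(j₀:ℝ)⌋₊ (rho j₀) :=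
          mul_le_mul hq (g_ge α (le_of_lt hα0) (by linarith) j₀ h1) (by positivity)
            (Real.rpow_nonneg (by norm_num) _)
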